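/- Let C be a set, H := ℓ²(C), H_k := ℓ²(C^k), and R_k := {r₁⊗⋯⊗r_k : r₁,…,r_k ∈ B(H)}. Let F be a finite simple graph, let h = (h_v)_{v∈V(F)} with h_v ∈ H_{deg(v)}^{S_{deg(v)}} for each v, and let u ∈ V(F). Then π_F(h) ≤ ‖h_u‖_{R_{deg(u)}} · ∏_{v∈V(F), v≠u} ‖h_v‖, where π_F(h) := Σ_{φ:E(F)→C} ∏_{v∈V(F)} h_v(φ(δ(v))). -/

import Mathlib

open scoped InnerProductSpace ENNReal
open Filter

noncomputable section

/-- `ℓ²(C)`, the real Hilbert space of square-summable functions `C → ℝ`. -/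
abbrev l2 (C : Type) : Type := lp (fun _ : C => ℝ) 2

/-- `H_k = ℓ²(C^k)`. -/
abbrev Hk (C : Type) (k : ℕ) : Type := lp (fun _ : (Fin k → C) => ℝ) 2

/-- `S_k`-invariance of an element of `H_k = ℓ²(C^k)` (for the action of `S_k` permuting
the coordinates of `C^k`). -/
def SkInv {C : Type} {k : ℕ} (h : Hk C k) : Prop :=
  ∀ (σ : Equiv.Perm (Fin k)) (c : Fin k → C), h (c ∘ σ) = h c

/-- `B_k`, the closed unit ball of the subspace `H_k^{S_k}` of `S_k`-invariant elements. -/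
def Bk (C : Type) (k : ℕ) : Set (Hk C k) := {x | SkInv x ∧ ‖x‖ ≤ 1}

/-- `R_k`, the set of elementary tensors `r₁ ⊗ ⋯ ⊗ r_k` with each `rᵢ` in the closed unit
ball of `ℓ²(C)`. -/
def Rk (C : Type) (k : ℕ) : Set (Hk C k) :=
  {x | ∃ r : Fin k → l2 C, (∀ i, ‖r i‖ ≤ 1) ∧ ∀ c : Fin k → C, x c = ∏ i, r i (c i)}

/-- The seminorm `‖x‖_R = sup_{r ∈ R} |⟨r,x⟩|`. -/
def normR {H : Type*} [NormedAddCommGroup H] [InnerProductSpace ℝ H] (R : Set H) (x : H) : ℝ :=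
  ⨆ r : R, |⟪(r : H), x⟫_ℝ|

/-- The pseudometric `d_R(x,y) = ‖x - y‖_R`. -/
def dR {H : Type*} [NormedAddCommGroup H] [InnerProductSpace ℝ H] (R : Set H) (x y : H) : ℝ :=
  normR R (x - y)

/-- The topology induced by a pseudometric `d` : the one generated by the open balls of `d`. -/
def ballTopology {X : Type*} (d : X → X → ℝ) : TopologicalSpace X :=
  TopologicalSpace.generateFrom {s | ∃ x ε, 0 < ε ∧ s = {y | d x y < ε}}

/-- `δ` enumerates, for each vertex `v`, the edges of `F` incident with `v` (in some order). -/
def IsEnum {V : Type} [Fintype V] [DecidableEq V] (F : SimpleGraph V) [DecidableRel F.Adj]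
    (δ : ∀ v : V, Fin (F.degree v) → F.edgeSet) : Prop :=
  ∀ v : V, Function.Injective (δ v) ∧
    ∀ e : F.edgeSet, v ∈ (e : Sym2 V) ↔ e ∈ Set.range (δ v)

/-- The partition function `π_F(h) = Σ_{φ : E(F) → C} ∏_{v ∈ V(F)} h_v(φ(δ(v)))`. -/
def piF {C V : Type} [Fintype V] [DecidableEq V] (F : SimpleGraph V) [DecidableRel F.Adj]
    (δ : ∀ v : V, Fin (F.degree v) → F.edgeSet)
    (h : ∀ v : V, Hk C (F.degree v)) : ℝ :=
  ∑' φ : F.edgeSet → C, ∏ v : V, h v (fun i => φ (δ v i))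

section Proofs
variable {α : Type}

lemma tsum_mul_le_sqrt {α : Type*} (f g : α → ℝ≥0∞) :
    ∑' a, f a * g a ≤ (∑' a, f a ^ 2) ^ (2⁻¹ : ℝ) * (∑' a, g a ^ 2) ^ (2⁻¹ : ℝ) := by
  letI : MeasurableSpace α := ⊤
  have hms : ∀ (h : α → ℝ≥0∞), Measurable h := fun h s _ => trivial
  have hconj : Real.HolderConjugate 2 2 := Real.HolderConjugate.two_two
  have H := ENNReal.lintegral_mul_le_Lp_mul_Lq (MeasureTheory.Measure.count (α := α)) hconj
    (hms f).aemeasurable (hms g).aemeasurable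
  simp only [MeasureTheory.lintegral_count] at H
  calc ∑' a, f a * g a ≤ (∑' a, f a ^ (2:ℝ)) ^ (1/2 : ℝ) * (∑' a, g a ^ (2:ℝ)) ^ (1/2:ℝ) := H
  _ = _ := by norm_num [ENNReal.rpow_two]

theorem tsum_pi_prod : ∀ (J : Type) [Fintype J] (A : J → Type) (f : ∀ j, A j → ℝ≥0∞),
    ∑' g : (∀ j, A j), ∏ j, f j (g j) = ∏ j, ∑' a, f j a := by
  refine Fintype.induction_empty_option ?_ ?_ ?_
  · intro α β _ e ih A f
    letI : Fintype α := Fintype.ofEquiv β e.symm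
    have h1 : ∀ g : ∀ a, A (e a), ∏ b, f b ((Equiv.piCongrLeft A e) g b)
        = ∏ a, f (e a) (g a) := by
      intro g
      rw [← Equiv.prod_comp e (fun b => f b ((Equiv.piCongrLeft A e) g b))]
      exact Finset.prod_congr rfl fun a _ => by rw [Equiv.piCongrLeft_apply_apply]
    calc ∑' g : (∀ b, A b), ∏ b, f b (g b)
        = ∑' g : (∀ a, A (e a)), ∏ b, f b ((Equiv.piCongrLeft A e) g b) :=
          ((Equiv.piCongrLeft A e).tsum_eq _).symm
      _ = ∑' g : (∀ a, A (e a)), ∏ a, f (e a) (g a) := tsum_congr h1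
      _ = ∏ a, ∑' x, f (e a) x := ih (fun a => A (e a)) (fun a => f (e a))
      _ = ∏ b, ∑' x, f b x := Equiv.prod_comp e (fun b => ∑' x, f b x)
  · intro A f
    rw [tsum_eq_single (fun x => x.elim)]
    · simp
    · intro g hg; exact absurd (funext fun x => x.elim) hg
  · intro α _ ih A f
    calc ∑' g : (∀ j : Option α, A j), ∏ j, f j (g j)
        = ∑' c : (A none × ∀ a, A (some a)), ∏ j, f j ((Equiv.piOptionEquivProd (β := A)).symm c j) :=
          ((Equiv.piOptionEquivProd (β := A)).symm.tsum_eq _).symm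
      _ = ∑' (x : A none) (g : ∀ a, A (some a)),
            ∏ j, f j ((Equiv.piOptionEquivProd (β := A)).symm (x, g) j) := ENNReal.tsum_prod'
      _ = ∑' (x : A none) (g : ∀ a, A (some a)), f none x * ∏ a, f (some a) (g a) := by
          refine tsum_congr fun x => tsum_congr fun g => ?_
          rw [Fintype.prod_option]; rfl
      _ = ∑' (x : A none), f none x * ∑' g : (∀ a, A (some a)), ∏ a, f (some a) (g a) :=
          tsum_congr fun x => ENNReal.tsum_mul_left
      _ = (∑' x : A none, f none x) * ∑' g : (∀ a, A (some a)), ∏ a, f (some a) (g a) :=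
          ENNReal.tsum_mul_right
      _ = (∑' x : A none, f none x) * ∏ a, ∑' x, f (some a) x := by
          rw [ih (fun a => A (some a)) (fun a => f (some a))]
      _ = ∏ j : Option α, ∑' x, f j x := (Fintype.prod_option (fun j => ∑' x : A j, f j x)).symm

theorem finner_empty {C V : Type} [Fintype V] (hV : IsEmpty V) (E : Type) (p : E → V)
    (mem : E → V → Prop) (G : ∀ v, ({e // mem e v} → C) → ℝ≥0∞) :
    ∑' ψ : E → C, ∏ v, G v (fun e => ψ e.val) ≤ ∏ v, (∑' x, G v x ^ 2) ^ (2⁻¹ : ℝ) := by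
  haveI : IsEmpty E := ⟨fun e => hV.false (p e)⟩
  haveI : Unique (E → C) := ⟨⟨fun e => (IsEmpty.false e).elim⟩, fun f => funext fun e => (IsEmpty.false e).elim⟩
  rw [tsum_eq_single (default : E → C) (fun b hb => absurd (Subsingleton.elim b default) hb)]
  simp [Finset.univ_eq_empty]

theorem finner {C : Type} : ∀ (n : ℕ) (V : Type) [Fintype V], Fintype.card V ≤ n →
    ∀ (E : Type) [Fintype E] (p q : E → V) (mem : E → V → Prop),
    (∀ e, mem e (p e)) → (∀ e, mem e (q e)) → (∀ e, p e ≠ q e) →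
    (∀ e v, mem e v → v = p e ∨ v = q e) →
    ∀ (G : ∀ v, ({e // mem e v} → C) → ℝ≥0∞),
    ∑' ψ : E → C, ∏ v, G v (fun e => ψ e.val) ≤ ∏ v, (∑' x, G v x ^ 2) ^ (2⁻¹ : ℝ) := by
  intro n
  induction n with
  | zero =>
    intro V _ hV E _ p q mem hp hq hpq hex G
    exact finner_empty (Fintype.card_eq_zero_iff.mp (Nat.le_zero.mp hV)) E p mem G
  | succ n ih =>
    intro V _ hV E _ p q mem hp hq hpq hex G
    classical
    rcases isEmpty_or_nonempty V with hVe | ⟨⟨v₀⟩⟩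
    · exact finner_empty hVe E p mem G
    -- the split equivalence on assignments
    let Φ : (E → C) ≃ ({e : E // mem e v₀} → C) × ({e : E // ¬ mem e v₀} → C) :=
      Equiv.piEquivPiSubtypeProd (fun e => mem e v₀) (fun _ => C)
    -- the other endpoint of an edge incident to v₀
    let o : {e : E // mem e v₀} → {v : V // v ≠ v₀} := fun e =>
      if h : p e.val = v₀ then ⟨q e.val, fun h2 => hpq e.val (h.trans h2.symm)⟩
      else ⟨p e.val, h⟩
    have homem : ∀ e : {e : E // mem e v₀}, mem e.val (o e).val := by
      intro e
      by_cases h : p e.val = v₀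
      · simp only [o, dif_pos h]; exact hq e.val
      · simp only [o, dif_neg h]; exact hp e.val
    have houniq : ∀ (e : {e : E // mem e v₀}) (v : V), mem e.val v → v ≠ v₀ → v = (o e).val := by
      intro e v hv hne
      rcases hex e.val v hv with rfl | rfl
      · by_cases h0 : p e.val = v₀
        · exact absurd h0 hne
        · simp only [o, dif_neg h0]
      · by_cases h0 : p e.val = v₀
        · simp only [o, dif_pos h0]
        · rcases hex e.val v₀ e.2 with h1 | h1
          · exact absurd h1.symm h0
          · exact absurd h1.symm hne
    let arg : ∀ (v : V), ({e : E // mem e v₀} → C) → ({e : E // ¬ mem e v₀} → C) →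
        ({e : E // mem e v} → C) :=
      fun v x y e => if h : mem e.val v₀ then x ⟨e.val, h⟩ else y ⟨e.val, h⟩
    have hsymm : ∀ (x : {e : E // mem e v₀} → C) (y : {e : E // ¬ mem e v₀} → C) (e : E),
        Φ.symm (x, y) e = if h : mem e v₀ then x ⟨e, h⟩ else y ⟨e, h⟩ := by
      intro x y e
      simp [Φ, Equiv.piEquivPiSubtypeProd_symm_apply]
    let P : ({e : E // mem e v₀} → C) → ({e : E // ¬ mem e v₀} → C) → ℝ≥0∞ :=
      fun x y => ∏ v' : {v : V // v ≠ v₀}, G v'.val (arg v'.val x y)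
    have hprodsplit : ∀ f : V → ℝ≥0∞, ∏ v, f v = f v₀ * ∏ v' : {v : V // v ≠ v₀}, f v'.val := by
      intro f
      rw [← Finset.mul_prod_erase Finset.univ f (Finset.mem_univ v₀)]
      congr 1
      exact Finset.prod_subtype (Finset.univ.erase v₀) (by simp) f
    have hF : ∀ x y, (∏ v, G v (fun e => Φ.symm (x, y) e.val)) = G v₀ x * P x y := by
      intro x y
      have h1 : ∀ v : V, (fun (e : {e : E // mem e v}) => Φ.symm (x, y) e.val) = arg v x y := by
        intro v; funext e; rw [hsymm]
      rw [hprodsplit (fun v => G v (fun e => Φ.symm (x, y) e.val))]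
      congr 1
      · rw [h1 v₀]
        congr 1
        funext e
        simp only [arg, dif_pos e.2]
    have hasm_pf : ∀ (v' : {v : V // v ≠ v₀}) (e : E) (h : mem e v₀), mem e v'.val →
        o ⟨e, h⟩ = v' := fun v' e h hv => Subtype.ext (houniq ⟨e, h⟩ v'.val hv v'.2).symm
    let asm : ∀ (v' : {v : V // v ≠ v₀}),
        ({e : {e : E // ¬ mem e v₀} // mem e.val v'.val} → C) →
        ({e : {e : E // mem e v₀} // o e = v'} → C) → ({e : E // mem e v'.val} → C) :=
      fun v' z w e => if h : mem e.val v₀ then w ⟨⟨e.val, h⟩, hasm_pf v' e.val h e.2⟩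
        else z ⟨⟨e.val, h⟩, e.2⟩
    have harg' : ∀ (v' : {v : V // v ≠ v₀}) x y,
        arg v'.val x y = asm v' (fun e => y e.val) (fun e => x e.val) := by
      intro v' x y; funext e
      simp only [arg, asm]
    let Θ : ({e : E // mem e v₀} → C) ≃
        (∀ v' : {v : V // v ≠ v₀}, ({e : {e : E // mem e v₀} // o e = v'} → C)) :=
      { toFun := fun x v' e => x e.val
        invFun := fun g e => g (o e) ⟨e, rfl⟩
        left_inv := fun x => rfl
        right_inv := fun g => by
          funext v' e
          obtain ⟨ee, he⟩ := e
          subst he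
          rfl }
    have hfact : ∀ y : ({e : E // ¬ mem e v₀} → C),
        ∑' x : ({e : E // mem e v₀} → C), P x y ^ 2
          = ∏ v' : {v : V // v ≠ v₀}, ∑' w, (G v'.val (asm v' (fun e => y e.val) w)) ^ 2 := by
      intro y
      have h2 : ∀ x, P x y ^ 2 = ∏ v' : {v : V // v ≠ v₀},
          (G v'.val (asm v' (fun e => y e.val) ((Θ x) v'))) ^ 2 := by
        intro x
        rw [show P x y = ∏ v' : {v : V // v ≠ v₀}, G v'.val (arg v'.val x y) from rfl,
          ← Finset.prod_pow]
        exact Finset.prod_congr rfl fun v' _ => by rw [harg' v' x y]; rfl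
      calc ∑' x, P x y ^ 2
          = ∑' x, ∏ v' : {v : V // v ≠ v₀},
              (G v'.val (asm v' (fun e => y e.val) ((Θ x) v'))) ^ 2 := tsum_congr h2
        _ = ∑' g : (∀ v' : {v : V // v ≠ v₀}, ({e : {e : E // mem e v₀} // o e = v'} → C)),
              ∏ v' : {v : V // v ≠ v₀}, (G v'.val (asm v' (fun e => y e.val) (g v'))) ^ 2 :=
            Θ.tsum_eq (fun g => ∏ v' : {v : V // v ≠ v₀},
              (G v'.val (asm v' (fun e => y e.val) (g v'))) ^ 2)
        _ = _ := tsum_pi_prod _ _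
              (fun v' w => (G v'.val (asm v' (fun e => y e.val) w)) ^ 2)
    let Gh : ∀ v' : {v : V // v ≠ v₀},
        ({e : {e : E // ¬ mem e v₀} // mem e.val v'.val} → C) → ℝ≥0∞ :=
      fun v' z => (∑' w, (G v'.val (asm v' z w)) ^ 2) ^ (2⁻¹ : ℝ)
    have hcard : Fintype.card {v : V // v ≠ v₀} ≤ n := by
      have h5 : Fintype.card {v : V // v ≠ v₀} < Fintype.card V :=
        Fintype.card_subtype_lt (x := v₀) (by simp)
      omega
    have hih := ih {v : V // v ≠ v₀} hcard {e : E // ¬ mem e v₀}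
      (fun e => ⟨p e.val, fun h => e.2 (by have h6 := hp e.val; rw [h] at h6; exact h6)⟩)
      (fun e => ⟨q e.val, fun h => e.2 (by have h6 := hq e.val; rw [h] at h6; exact h6)⟩)
      (fun e v' => mem e.val v'.val)
      (fun e => hp e.val) (fun e => hq e.val)
      (fun e h => hpq e.val (congrArg Subtype.val h))
      (fun e v' hv => by
        rcases hex e.val v'.val hv with h | h
        exacts [Or.inl (Subtype.ext h), Or.inr (Subtype.ext h)])
      Gh
    let Ξ : ∀ v' : {v : V // v ≠ v₀},
        (({e : {e : E // ¬ mem e v₀} // mem e.val v'.val} → C) ×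
          ({e : {e : E // mem e v₀} // o e = v'} → C)) ≃ ({e : E // mem e v'.val} → C) :=
      fun v' =>
      { toFun := fun zw => asm v' zw.1 zw.2
        invFun := fun t => (fun e => t ⟨e.val.val, e.2⟩, fun e => t ⟨e.val.val, by have h7 := homem e.val; rw [e.2] at h7; exact h7⟩)
        left_inv := fun zw => by
          obtain ⟨z, w⟩ := zw
          refine Prod.ext (funext fun e => ?_) (funext fun e => ?_)
          · show asm v' z w ⟨e.val.val, e.2⟩ = z e
            simp only [asm]
            rw [dif_neg e.val.2]
          · show asm v' z w ⟨e.val.val, by have h7 := homem e.val; rw [e.2] at h7; exact h7⟩ = w e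
            simp only [asm]
            rw [dif_pos e.val.2]
        right_inv := fun t => by
          funext e
          simp only [asm]
          split <;> rfl }
    have hGh : ∀ v' : {v : V // v ≠ v₀},
        (∑' z, (Gh v' z) ^ 2) = ∑' t : ({e : E // mem e v'.val} → C), (G v'.val t) ^ 2 := by
      intro v'
      have h3 : ∀ z, (Gh v' z) ^ 2 = ∑' w, (G v'.val (asm v' z w)) ^ 2 := by
        intro z
        show ((∑' w, (G v'.val (asm v' z w)) ^ 2) ^ (2⁻¹ : ℝ)) ^ 2 = _
        rw [← ENNReal.rpow_natCast (_ ^ (2⁻¹ : ℝ)) 2, ← ENNReal.rpow_mul]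
        norm_num
      rw [tsum_congr h3, ← ENNReal.tsum_prod]
      calc ∑' (p : ({e : {e : E // ¬ mem e v₀} // mem e.val v'.val} → C) ×
              ({e : {e : E // mem e v₀} // o e = v'} → C)), (G v'.val (asm v' p.1 p.2)) ^ 2
          = ∑' p, (G v'.val ((Ξ v') p)) ^ 2 := tsum_congr fun p => rfl
        _ = _ := (Ξ v').tsum_eq (fun t => (G v'.val t) ^ 2)
    calc ∑' ψ : E → C, ∏ v, G v (fun e => ψ e.val)
        = ∑' c, ∏ v, G v (fun e => Φ.symm c e.val) := (Φ.symm.tsum_eq _).symm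
      _ = ∑' (x) (y), ∏ v, G v (fun e => Φ.symm (x, y) e.val) := ENNReal.tsum_prod'
      _ = ∑' (y) (x), G v₀ x * P x y := by
          rw [ENNReal.tsum_comm]
          exact tsum_congr fun y => tsum_congr fun x => hF x y
      _ ≤ ∑' y, (∑' x, G v₀ x ^ 2) ^ (2⁻¹ : ℝ) * (∑' x, P x y ^ 2) ^ (2⁻¹ : ℝ) :=
          ENNReal.tsum_le_tsum fun y => tsum_mul_le_sqrt _ _
      _ = (∑' x, G v₀ x ^ 2) ^ (2⁻¹ : ℝ) * ∑' y, (∑' x, P x y ^ 2) ^ (2⁻¹ : ℝ) :=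
          ENNReal.tsum_mul_left
      _ = (∑' x, G v₀ x ^ 2) ^ (2⁻¹ : ℝ) * ∑' y : ({e : E // ¬ mem e v₀} → C), ∏ v' : {v : V // v ≠ v₀},
            Gh v' (fun e => y e.val) := by
          congr 1
          refine tsum_congr fun y => ?_
          rw [hfact y, ← ENNReal.prod_rpow_of_nonneg (by norm_num : (0:ℝ) ≤ 2⁻¹)]
      _ ≤ (∑' x, G v₀ x ^ 2) ^ (2⁻¹ : ℝ) * ∏ v' : {v : V // v ≠ v₀},
            (∑' z, (Gh v' z) ^ 2) ^ (2⁻¹ : ℝ) := by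
          exact mul_le_mul_right hih _
      _ = ∏ v, (∑' x, G v x ^ 2) ^ (2⁻¹ : ℝ) := by
          rw [hprodsplit (fun v => (∑' x, G v x ^ 2) ^ (2⁻¹ : ℝ))]
          congr 1
          exact Finset.prod_congr rfl fun v' _ => by rw [hGh v']

lemma rpow_half_sq (x : ℝ≥0∞) : (x ^ (2⁻¹ : ℝ)) ^ (2:ℕ) = x := by
  rw [← ENNReal.rpow_natCast (x ^ (2⁻¹:ℝ)) 2, ← ENNReal.rpow_mul]
  norm_num

lemma sq_rpow_half (x : ℝ≥0∞) : (x ^ (2:ℕ)) ^ (2⁻¹ : ℝ) = x := by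
  rw [← ENNReal.rpow_natCast x 2, ← ENNReal.rpow_mul]
  norm_num

lemma norm_sq_eq (a : ℝ) : ‖a‖ ^ ((2:ℝ≥0∞).toReal) = a ^ (2:ℕ) := by
  rw [ENNReal.toReal_ofNat, show ((2:ℝ)) = ((2:ℕ):ℝ) by norm_num, Real.rpow_natCast]
  rw [Real.norm_eq_abs, sq_abs]

lemma lp2_summable_sq (f : lp (fun _ : α => ℝ) 2) :
    Summable (fun a => (f a) ^ (2:ℕ)) := by
  have h := (memℓp_gen_iff (by norm_num : 0 < (2:ℝ≥0∞).toReal)).mp (lp.memℓp f)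
  exact (summable_congr fun a => (norm_sq_eq (f a))).mp h

lemma lp2_norm_sq (f : lp (fun _ : α => ℝ) 2) : ‖f‖ ^ (2:ℕ) = ∑' a, (f a) ^ (2:ℕ) := by
  have h := lp.norm_rpow_eq_tsum (p := 2) (by norm_num) f
  rw [show ((2:ℝ≥0∞).toReal) = ((2:ℕ):ℝ) by norm_num, Real.rpow_natCast] at h
  rw [h]
  exact tsum_congr fun a => by
    rw [show ‖f a‖ ^ ((2:ℕ):ℝ) = ‖f a‖ ^ ((2:ℝ≥0∞).toReal) by norm_num, norm_sq_eq]

lemma lp2_enn (f : lp (fun _ : α => ℝ) 2) :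
    ∑' a, ENNReal.ofReal ((f a) ^ (2:ℕ)) = ENNReal.ofReal ‖f‖ ^ (2:ℕ) := by
  rw [← ENNReal.ofReal_tsum_of_nonneg (fun a => sq_nonneg _) (lp2_summable_sq f),
    ← lp2_norm_sq, ENNReal.ofReal_pow (norm_nonneg f)]

lemma lp2_enn_sqrt (f : lp (fun _ : α => ℝ) 2) :
    (∑' a, ENNReal.ofReal ((f a) ^ (2:ℕ))) ^ (2⁻¹:ℝ) = ENNReal.ofReal ‖f‖ := by
  rw [lp2_enn, sq_rpow_half]

lemma tensor_enn {k : ℕ} (r : Fin k → lp (fun _ : α => ℝ) 2) :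
    ∑' c : Fin k → α, ENNReal.ofReal ((∏ i, r i (c i)) ^ (2:ℕ))
      = ∏ i, ENNReal.ofReal ‖r i‖ ^ (2:ℕ) := by
  have h1 : ∀ c : Fin k → α, ENNReal.ofReal ((∏ i, r i (c i)) ^ (2:ℕ))
      = ∏ i, ENNReal.ofReal ((r i (c i)) ^ (2:ℕ)) := by
    intro c
    rw [← Finset.prod_pow, ENNReal.ofReal_prod_of_nonneg (fun i _ => sq_nonneg _)]
  rw [tsum_congr h1, tsum_pi_prod (Fin k) (fun _ => α)
    (fun i c => ENNReal.ofReal ((r i c) ^ (2:ℕ)))]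
  exact Finset.prod_congr rfl fun i _ => lp2_enn (r i)

lemma summable_of_enn_ne_top {f : α → ℝ} (hnn : ∀ a, 0 ≤ f a)
    (h : ∑' a, ENNReal.ofReal (f a) ≠ ∞) : Summable f := by
  have h2 := ENNReal.summable_toReal h
  exact (summable_congr fun a => ENNReal.toReal_ofReal (hnn a)).mp h2

lemma tensor_memℓp {k : ℕ} (r : Fin k → lp (fun _ : α => ℝ) 2) :
    Memℓp (fun c : Fin k → α => ∏ i, r i (c i)) 2 := by
  apply memℓp_gen (p := 2)
  have hs : Summable (fun c : Fin k → α => (∏ i, r i (c i)) ^ (2:ℕ)) := by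
    apply summable_of_enn_ne_top (fun c => sq_nonneg _)
    rw [tensor_enn]
    exact ENNReal.prod_ne_top fun i _ => ENNReal.pow_ne_top ENNReal.ofReal_ne_top
  exact (summable_congr fun c => (norm_sq_eq _).symm).mp hs

/-- the elementary tensor of `k` elements of `ℓ²(α)`, as an element of `ℓ²(α^k)`. -/
def tensorLp {k : ℕ} (r : Fin k → lp (fun _ : α => ℝ) 2) : lp (fun _ : Fin k → α => ℝ) 2 :=
  ⟨fun c => ∏ i, r i (c i), tensor_memℓp r⟩

lemma tensorLp_apply {k : ℕ} (r : Fin k → lp (fun _ : α => ℝ) 2) (c : Fin k → α) :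
    tensorLp r c = ∏ i, r i (c i) := rfl

lemma tensorLp_norm {k : ℕ} (r : Fin k → lp (fun _ : α => ℝ) 2) :
    ‖tensorLp r‖ = ∏ i, ‖r i‖ := by
  have h := lp2_enn (tensorLp r)
  rw [show (∑' c : Fin k → α, ENNReal.ofReal ((tensorLp r c) ^ (2:ℕ))) =
      ∏ i, ENNReal.ofReal ‖r i‖ ^ (2:ℕ) from tensor_enn r] at h
  have h2 : ENNReal.ofReal ((∏ i, ‖r i‖) ^ (2:ℕ)) = ENNReal.ofReal (‖tensorLp r‖ ^ (2:ℕ)) := by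
    rw [ENNReal.ofReal_pow (norm_nonneg _), ENNReal.ofReal_pow (Finset.prod_nonneg fun i _ => norm_nonneg _),
      ENNReal.ofReal_prod_of_nonneg (fun i _ => norm_nonneg _), ← h, Finset.prod_pow]
  have h3 := (ENNReal.ofReal_eq_ofReal_iff (by positivity) (by positivity)).mp h2
  nlinarith [norm_nonneg (tensorLp r), Finset.prod_nonneg (fun i (_ : i ∈ Finset.univ) => norm_nonneg (r i)),
    sq_nonneg ((∏ i, ‖r i‖) - ‖tensorLp r‖), sq_nonneg ((∏ i, ‖r i‖) + ‖tensorLp r‖)]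

lemma lp2_inner (f g : lp (fun _ : α => ℝ) 2) : ⟪f, g⟫_ℝ = ∑' a, f a * g a := by
  rw [lp.inner_eq_tsum]
  exact tsum_congr fun a => by
    rw [RCLike.inner_apply]; simp [starRingEnd_apply, mul_comm]

lemma normR_nonneg {H : Type*} [NormedAddCommGroup H] [InnerProductSpace ℝ H] (R : Set H)
    (x : H) : 0 ≤ normR R x := Real.iSup_nonneg fun _ => abs_nonneg _

lemma tsum_le_of_enn {ι : Type} (f : ι → ℝ) (hnn : ∀ i, 0 ≤ f i) {B : ℝ} (hB : 0 ≤ B)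
    (hle : ∑' i, ENNReal.ofReal (f i) ≤ ENNReal.ofReal B) : ∑' i, f i ≤ B := by
  by_cases hs : Summable f
  · have h1 := ENNReal.ofReal_tsum_of_nonneg hnn hs
    rw [← h1] at hle
    exact (ENNReal.ofReal_le_ofReal_iff hB).mp hle
  · rw [tsum_eq_zero_of_not_summable hs]; exact hB

lemma inner_le_normR {C : Type} {k : ℕ} (x : Hk C k) {xR : Hk C k} (hxR : xR ∈ Rk C k) :
    |⟪xR, x⟫_ℝ| ≤ normR (Rk C k) x := by
  have hb : BddAbove (Set.range fun r : (Rk C k) => |⟪(r : Hk C k), x⟫_ℝ|) := by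
    refine ⟨‖x‖, ?_⟩
    rintro _ ⟨r, rfl⟩
    obtain ⟨rr, hrr1, hrr2⟩ := r.2
    have hnorm : ‖(r : Hk C k)‖ ≤ 1 := by
      have heq : (r : Hk C k) = tensorLp rr :=
        lp.ext (funext fun c => by rw [tensorLp_apply]; exact hrr2 c)
      rw [heq, tensorLp_norm]
      exact Finset.prod_le_one (fun i _ => norm_nonneg _) (fun i _ => hrr1 i)
    calc |⟪(r : Hk C k), x⟫_ℝ| ≤ ‖(r : Hk C k)‖ * ‖x‖ := abs_real_inner_le_norm _ _
      _ ≤ 1 * ‖x‖ := mul_le_mul_of_nonneg_right hnorm (norm_nonneg x)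
      _ = ‖x‖ := one_mul _
  exact le_ciSup hb (⟨xR, hxR⟩ : (Rk C k))


end Proofs

set_option maxHeartbeats 1000000 in
/-- For a finite simple graph `F`, `h_v ∈ H_{deg v}^{S_{deg v}}` for each
vertex `v`, and a vertex `u`:
`π_F(h) ≤ ‖h_u‖_{R_{deg u}} · ∏_{v ≠ u} ‖h_v‖`. -/
theorem stmt11 (C : Type) {V : Type} [Fintype V] [DecidableEq V] (F : SimpleGraph V)
    [DecidableRel F.Adj]
    (δ : ∀ v : V, Fin (F.degree v) → F.edgeSet) (hδ : IsEnum F δ)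
    (h : ∀ v : V, Hk C (F.degree v)) (hinv : ∀ v, SkInv (h v)) (u : V) :
    piF F δ h ≤ normR (Rk C (F.degree u)) (h u) * ∏ v ∈ Finset.univ.erase u, ‖h v‖ := by
  classical
  have hRHS0 : 0 ≤ normR (Rk C (F.degree u)) (h u) * ∏ v ∈ Finset.univ.erase u, ‖h v‖ :=
    mul_nonneg (normR_nonneg _ _) (Finset.prod_nonneg fun v _ => norm_nonneg _)
  have hpiF : piF F δ h = ∑' φ : F.edgeSet → C, ∏ v : V, (h v) (fun i => φ (δ v i)) := rfl
  rcases isEmpty_or_nonempty C with hC | hC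
  · rcases isEmpty_or_nonempty F.edgeSet with hE | hE
    · -- no edges at all
      haveI : IsEmpty F.edgeSet := hE
      haveI hdeg : ∀ v : V, IsEmpty (Fin (F.degree v)) := fun v => ⟨fun j => hE.false (δ v j)⟩
      haveI : ∀ v : V, IsEmpty (Fin (F.degree v)) := hdeg
      have h1 : piF F δ h = ∏ v : V, (h v) (fun i => (default : F.edgeSet → C) (δ v i)) := by
        rw [hpiF]
        exact tsum_eq_single default (fun b hb => absurd (Subsingleton.elim b default) hb)
      let r0 : Fin (F.degree u) → l2 C := fun i => isEmptyElim i
      have hx1R : tensorLp r0 ∈ Rk C (F.degree u) :=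
        ⟨r0, fun i => isEmptyElim i, fun c => tensorLp_apply r0 c⟩
      have hx1val : ∀ c : Fin (F.degree u) → C, tensorLp r0 c = 1 := by
        intro c
        rw [tensorLp_apply, Finset.univ_eq_empty, Finset.prod_empty]
      haveI : Unique (Fin (F.degree u) → C) := Pi.uniqueOfIsEmpty _
      have hinner1 : ⟪tensorLp r0, h u⟫_ℝ = (h u) default := by
        rw [lp2_inner,
          tsum_eq_single default (fun b hb => absurd (Subsingleton.elim b default) hb),
          hx1val, one_mul]
      have habs_u : |(h u) (fun i => (default : F.edgeSet → C) (δ u i))|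
          ≤ normR (Rk C (F.degree u)) (h u) := by
        have h2 : (fun i => (default : F.edgeSet → C) (δ u i))
            = (default : Fin (F.degree u) → C) := Subsingleton.elim _ _
        rw [h2, ← hinner1]
        exact inner_le_normR (h u) hx1R
      calc piF F δ h ≤ |piF F δ h| := le_abs_self _
        _ = |(h u) (fun i => (default : F.edgeSet → C) (δ u i))| *
            |∏ v ∈ Finset.univ.erase u, (h v) (fun i => (default : F.edgeSet → C) (δ v i))| := by
            rw [h1, ← Finset.mul_prod_erase Finset.univ _ (Finset.mem_univ u), abs_mul]
        _ ≤ normR (Rk C (F.degree u)) (h u) * ∏ v ∈ Finset.univ.erase u, ‖h v‖ := by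
            apply mul_le_mul habs_u ?_ (abs_nonneg _) (normR_nonneg _ _)
            rw [Finset.abs_prod]
            refine Finset.prod_le_prod (fun v _ => abs_nonneg _) (fun v _ => ?_)
            have h3 := lp.norm_apply_le_norm (by norm_num : (2:ℝ≥0∞) ≠ 0) (h v)
              (fun i => (default : F.edgeSet → C) (δ v i))
            simpa [Real.norm_eq_abs] using h3
    · haveI : IsEmpty (F.edgeSet → C) := ⟨fun φ => hC.false (φ hE.some)⟩
      rw [hpiF, tsum_empty]
      exact hRHS0
  · obtain ⟨c₀⟩ := hC
    let eqE : ∀ v : V, Fin (F.degree v) ≃ {e : F.edgeSet // v ∈ (e : Sym2 V)} := fun v =>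
      Equiv.ofBijective (fun i => ⟨δ v i, ((hδ v).2 (δ v i)).mpr ⟨i, rfl⟩⟩)
        ⟨fun i j hij => (hδ v).1 (Subtype.ext_iff.mp hij),
         fun e => by
           obtain ⟨i, hi⟩ := ((hδ v).2 e.val).mp e.2
           exact ⟨i, Subtype.ext hi⟩⟩
    have heqE : ∀ (v : V) (i : Fin (F.degree v)), ((eqE v) i).val = δ v i := fun v i => rfl
    have heqEs : ∀ (v : V) (x : {e : F.edgeSet // v ∈ (e : Sym2 V)}),
        (δ v ((eqE v).symm x) : F.edgeSet) = x.val := fun v x =>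
      congrArg Subtype.val ((eqE v).apply_symm_apply x)
    have humem : ∀ i : Fin (F.degree u), u ∈ ((δ u i : F.edgeSet) : Sym2 V) := fun i =>
      ((hδ u).2 (δ u i)).mpr ⟨i, rfl⟩
    have hvmem : ∀ (v : V) (j : Fin (F.degree v)), v ∈ ((δ v j : F.edgeSet) : Sym2 V) :=
      fun v j => ((hδ v).2 (δ v j)).mpr ⟨j, rfl⟩
    let w : Fin (F.degree u) → V := fun i => Sym2.Mem.other' (humem i)
    have hwspec : ∀ i, s(u, w i) = ((δ u i : F.edgeSet) : Sym2 V) := fun i =>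
      Sym2.other_spec' (humem i)
    have hwmem : ∀ i, w i ∈ ((δ u i : F.edgeSet) : Sym2 V) := fun i => Sym2.other_mem' (humem i)
    have hwne : ∀ i, w i ≠ u := by
      intro i hiu
      have hdiag := F.not_isDiag_of_mem_edgeSet (δ u i).2
      rw [← hwspec i, hiu] at hdiag
      exact hdiag (Sym2.mk_isDiag_iff.mpr rfl)
    have hwuniq : ∀ (i : Fin (F.degree u)) (v : V),
        v ∈ ((δ u i : F.edgeSet) : Sym2 V) → v ≠ u → v = w i := by
      intro i v hv hne
      rw [← hwspec i, Sym2.mem_iff] at hv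
      tauto
    have hwinj : Function.Injective w := by
      intro i j hij
      apply (hδ u).1
      apply Subtype.ext
      rw [← hwspec i, ← hwspec j, hij]
    have hidx : ∀ (v : V), v ≠ u → ∀ (j : Fin (F.degree v))
        (hm : u ∈ ((δ v j : F.edgeSet) : Sym2 V)),
        w ((eqE u).symm ⟨δ v j, hm⟩) = v := by
      intro v hvu j hm
      refine (hwuniq ((eqE u).symm ⟨δ v j, hm⟩) v ?_ hvu).symm
      rw [heqEs u ⟨δ v j, hm⟩]
      exact hvmem v j
    let Ψ : (F.edgeSet → C) ≃ ({e : F.edgeSet // ¬ u ∈ (e : Sym2 V)} → C) ×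
        (Fin (F.degree u) → C) :=
      { toFun := fun φ => (fun e => φ e.val, fun i => φ (δ u i))
        invFun := fun z e => if hm : u ∈ (e : Sym2 V) then z.2 ((eqE u).symm ⟨e, hm⟩)
          else z.1 ⟨e, hm⟩
        left_inv := fun φ => by
          funext e
          by_cases hm : u ∈ (e : Sym2 V)
          · simp only [dif_pos hm]
            exact congrArg φ (heqEs u ⟨e, hm⟩)
          · simp only [dif_neg hm]
        right_inv := fun z => by
          refine Prod.ext (funext fun e => ?_) (funext fun i => ?_)
          · show (if hm : u ∈ (e.val : Sym2 V) then _ else _) = z.1 e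
            rw [dif_neg e.2]
          · show (if hm : u ∈ ((δ u i : F.edgeSet) : Sym2 V) then
                z.2 ((eqE u).symm ⟨δ u i, hm⟩) else _) = z.2 i
            rw [dif_pos (humem i)]
            exact congrArg z.2 (by
              rw [show (⟨δ u i, humem i⟩ : {e : F.edgeSet // u ∈ (e : Sym2 V)}) = (eqE u) i from
                Subtype.ext rfl, Equiv.symm_apply_apply]) }
    let args : ∀ v : V, (Fin (F.degree u) → C) →
        ({e : F.edgeSet // ¬ u ∈ (e : Sym2 V)} → C) → Fin (F.degree v) → C :=
      fun v a y j => if hm : u ∈ ((δ v j : F.edgeSet) : Sym2 V) then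
        a ((eqE u).symm ⟨δ v j, hm⟩) else y ⟨δ v j, hm⟩
    have hkey : ∀ (z : ({e : F.edgeSet // ¬ u ∈ (e : Sym2 V)} → C) × (Fin (F.degree u) → C))
        (v : V), (fun j => (Ψ.symm z) (δ v j)) = args v z.2 z.1 := fun z v => rfl
    let t : (F.edgeSet → C) → ℝ := fun φ => ∏ v : V, (h v) (fun i => φ (δ v i))
    by_cases hsum : Summable t
    · -- slice functions and their ℓ² membership
      have hsliceInj : ∀ (i : Fin (F.degree u))
          (y : {e : F.edgeSet // ¬ u ∈ (e : Sym2 V)} → C),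
          Function.Injective (fun c : C => args (w i) (fun _ => c) y) := by
        intro i y c c' hcc'
        have hj : (δ (w i) ((eqE (w i)).symm ⟨δ u i, hwmem i⟩) : F.edgeSet) = δ u i :=
          heqEs (w i) ⟨δ u i, hwmem i⟩
        have hm : u ∈ ((δ (w i) ((eqE (w i)).symm ⟨δ u i, hwmem i⟩) : F.edgeSet) : Sym2 V) := by
          rw [hj]; exact humem i
        have h2 := congrFun hcc' ((eqE (w i)).symm ⟨δ u i, hwmem i⟩)
        simpa only [args, dif_pos hm] using h2
      have hsliceMem : ∀ (i : Fin (F.degree u))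
          (y : {e : F.edgeSet // ¬ u ∈ (e : Sym2 V)} → C),
          Memℓp (fun c : C => (h (w i)) (args (w i) (fun _ => c) y)) 2 := by
        intro i y
        apply memℓp_gen (p := 2)
        have hs2 : Summable ((fun x => ((h (w i)) x) ^ (2:ℕ)) ∘
            (fun c : C => args (w i) (fun _ => c) y)) :=
          (lp2_summable_sq (h (w i))).comp_injective (hsliceInj i y)
        exact (summable_congr fun c => (norm_sq_eq _).symm).mp hs2
      let s : ({e : F.edgeSet // ¬ u ∈ (e : Sym2 V)} → C) → ∀ _ : Fin (F.degree u), l2 C :=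
        fun y i => ⟨fun c => (h (w i)) (args (w i) (fun _ => c) y), hsliceMem i y⟩
      -- non-neighbours of u
      let NB : Finset V := (Finset.univ.erase u) \ Finset.image w Finset.univ
      have hNB : ∀ v ∈ NB, ∀ (j : Fin (F.degree v)),
          ¬ u ∈ ((δ v j : F.edgeSet) : Sym2 V) := by
        intro v hv j hm
        simp only [NB, Finset.mem_sdiff, Finset.mem_erase, Finset.mem_univ] at hv
        exact hv.2 (by
          rw [Finset.mem_image]
          exact ⟨(eqE u).symm ⟨δ v j, hm⟩, Finset.mem_univ _, hidx v hv.1.1 j hm⟩)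
      let A : ({e : F.edgeSet // ¬ u ∈ (e : Sym2 V)} → C) → ℝ :=
        fun y => ∏ v ∈ NB, (h v) (args v (fun _ => c₀) y)
      have hargsNB : ∀ v ∈ NB, ∀ (a : Fin (F.degree u) → C) y,
          args v a y = args v (fun _ => c₀) y := by
        intro v hv a y
        funext j
        by_cases hm : u ∈ ((δ v j : F.edgeSet) : Sym2 V)
        · exact absurd hm (hNB v hv j)
        · simp only [args, dif_neg hm]
      have hargsW : ∀ (i : Fin (F.degree u)) (a : Fin (F.degree u) → C) y,
          args (w i) a y = args (w i) (fun _ => a i) y := by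
        intro i a y
        funext j
        by_cases hm : u ∈ ((δ (w i) j : F.edgeSet) : Sym2 V)
        · simp only [args, dif_pos hm]
          exact congrArg a (hwinj (by rw [hidx (w i) (hwne i) j hm]))
        · simp only [args, dif_neg hm]
      have hargsU : ∀ (a : Fin (F.degree u) → C) y, args u a y = a := by
        intro a y
        funext j
        simp only [args, dif_pos (humem j)]
        exact congrArg a (by
          rw [show (⟨δ u j, humem j⟩ : {e : F.edgeSet // u ∈ (e : Sym2 V)}) = (eqE u) j from
            Subtype.ext rfl, Equiv.symm_apply_apply])
      have himage : Finset.image w Finset.univ ⊆ Finset.univ.erase u := by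
        intro v hv
        rw [Finset.mem_image] at hv
        obtain ⟨i, _, rfl⟩ := hv
        exact Finset.mem_erase.mpr ⟨hwne i, Finset.mem_univ _⟩
      have hQ : ∀ y a, t (Ψ.symm (y, a)) =
          (h u) a * (A y * ∏ i, (s y i) (a i)) := by
        intro y a
        have h0 : t (Ψ.symm (y, a)) = ∏ v : V, (h v) (args v a y) :=
          Finset.prod_congr rfl fun v _ => congrArg (fun g => (h v) g) (hkey (y, a) v)
        rw [h0, ← Finset.mul_prod_erase Finset.univ _ (Finset.mem_univ u),
          congrArg (fun g => (h u) g) (hargsU a y)]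
        congr 1
        rw [← Finset.prod_sdiff himage]
        congr 1
        · exact Finset.prod_congr rfl fun v hv =>
            congrArg (fun g => (h v) g) (hargsNB v hv a y)
        · rw [Finset.prod_image (fun i _ j _ hij => hwinj hij)]
          exact Finset.prod_congr rfl fun i _ =>
            congrArg (fun g => (h (w i)) g) (hargsW i a y)
      have hsummZ : Summable (fun z : ({e : F.edgeSet // ¬ u ∈ (e : Sym2 V)} → C) ×
          (Fin (F.degree u) → C) => t (Ψ.symm z)) := Ψ.symm.summable_iff.mpr hsum
      have hpi2 : piF F δ h = ∑' y, ∑' a, t (Ψ.symm (y, a)) := by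
        rw [hpiF, ← Ψ.symm.tsum_eq t]
        exact Summable.tsum_prod' hsummZ hsummZ.prod_factor
      have hinner : ∀ y, ∑' a, t (Ψ.symm (y, a)) = A y * ⟪tensorLp (s y), h u⟫_ℝ := by
        intro y
        rw [lp2_inner]
        calc ∑' a, t (Ψ.symm (y, a)) = ∑' a, A y * (tensorLp (s y) a * (h u) a) := by
              refine tsum_congr fun a => ?_
              rw [hQ y a, tensorLp_apply]
              ring
          _ = A y * ∑' a, tensorLp (s y) a * (h u) a := tsum_mul_left
      have hTbound : ∀ y, |⟪tensorLp (s y), h u⟫_ℝ| ≤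
          normR (Rk C (F.degree u)) (h u) * ∏ i, ‖s y i‖ := by
        intro y
        by_cases hz : ∀ i, s y i ≠ 0
        · set r : Fin (F.degree u) → l2 C := fun i => ‖s y i‖⁻¹ • s y i with hrdef
          have hr1 : ∀ i, ‖r i‖ = 1 := fun i => by
            rw [hrdef, norm_smul, norm_inv, norm_norm,
              inv_mul_cancel₀ (norm_ne_zero_iff.mpr (hz i))]
          have hrR : tensorLp r ∈ Rk C (F.degree u) :=
            ⟨r, fun i => (hr1 i).le, fun c => tensorLp_apply r c⟩
          have hsplit : tensorLp (s y) = (∏ i, ‖s y i‖) • tensorLp r := by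
            apply lp.ext
            funext c
            rw [lp.coeFn_smul, Pi.smul_apply, tensorLp_apply, tensorLp_apply, smul_eq_mul,
              ← Finset.prod_mul_distrib]
            refine Finset.prod_congr rfl fun i _ => ?_
            rw [hrdef]
            simp only [lp.coeFn_smul, Pi.smul_apply, smul_eq_mul]
            rw [← mul_assoc, mul_inv_cancel₀ (norm_ne_zero_iff.mpr (hz i)), one_mul]
          rw [hsplit, real_inner_smul_left, abs_mul,
            abs_of_nonneg (Finset.prod_nonneg fun i _ => norm_nonneg _), mul_comm]
          exact mul_le_mul_of_nonneg_right (inner_le_normR (h u) hrR)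
            (Finset.prod_nonneg fun i _ => norm_nonneg _)
        · push_neg at hz
          obtain ⟨i0, hi0⟩ := hz
          have hT0 : tensorLp (s y) = 0 := by
            apply lp.ext
            funext c
            rw [tensorLp_apply]
            have : (s y i0) (c i0) = 0 := by rw [hi0]; simp
            calc ∏ i, (s y i) (c i) = 0 := Finset.prod_eq_zero (Finset.mem_univ i0) this
              _ = (0 : lp (fun _ : Fin (F.degree u) → C => ℝ) 2) c := by simp
          rw [hT0, inner_zero_left, abs_zero]
          exact mul_nonneg (normR_nonneg _ _) (Finset.prod_nonneg fun i _ => norm_nonneg _)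
      have hg : Summable (fun y => ∑' a, t (Ψ.symm (y, a))) := hsummZ.prod
      have habs : piF F δ h ≤ ∑' y, |A y * ⟪tensorLp (s y), h u⟫_ℝ| := by
        rw [hpi2]
        have hg2 : Summable (fun y => A y * ⟪tensorLp (s y), h u⟫_ℝ) :=
          (summable_congr hinner).mp hg
        refine Summable.tsum_le_tsum (fun y => ?_) hg hg2.abs
        rw [hinner y]
        exact le_abs_self _
      -- endpoints of edges
      have hedge : ∀ e : F.edgeSet, ∃ xy : V × V, xy.1 ≠ xy.2 ∧ (e : Sym2 V) = s(xy.1, xy.2) := by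
        intro e
        obtain ⟨⟨x, y⟩, hxy⟩ := Quot.exists_rep (e : Sym2 V)
        refine ⟨(x, y), fun hxx => ?_, hxy.symm⟩
        apply F.not_isDiag_of_mem_edgeSet e.2
        rw [← hxy]
        exact Sym2.mk_isDiag_iff.mpr hxx
      choose pq hpqne hpqspec using hedge
      let p' : {e : F.edgeSet // ¬ u ∈ (e : Sym2 V)} → {v : V // v ≠ u} := fun e =>
        ⟨(pq e.val).1, fun hh => e.2 (by rw [hpqspec e.val, hh]; exact Sym2.mem_mk_left _ _)⟩
      let q' : {e : F.edgeSet // ¬ u ∈ (e : Sym2 V)} → {v : V // v ≠ u} := fun e =>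
        ⟨(pq e.val).2, fun hh => e.2 (by rw [hpqspec e.val, hh]; exact Sym2.mem_mk_right _ _)⟩
      let mem' : {e : F.edgeSet // ¬ u ∈ (e : Sym2 V)} → {v : V // v ≠ u} → Prop :=
        fun e v' => v'.val ∈ (e.val : Sym2 V)
      have hp' : ∀ e, mem' e (p' e) := fun e => by
        show (pq e.val).1 ∈ (e.val : Sym2 V)
        rw [hpqspec e.val]; exact Sym2.mem_mk_left _ _
      have hq' : ∀ e, mem' e (q' e) := fun e => by
        show (pq e.val).2 ∈ (e.val : Sym2 V)
        rw [hpqspec e.val]; exact Sym2.mem_mk_right _ _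
      have hpq' : ∀ e, p' e ≠ q' e := fun e hh => hpqne e.val (Subtype.ext_iff.mp hh)
      have hex' : ∀ e v', mem' e v' → v' = p' e ∨ v' = q' e := by
        intro e v' hv
        have h5 : v'.val ∈ (e.val : Sym2 V) := hv
        rw [hpqspec e.val, Sym2.mem_iff] at h5
        rcases h5 with h5 | h5
        · exact Or.inl (Subtype.ext h5)
        · exact Or.inr (Subtype.ext h5)
      -- the vertex weight functions for the reduced graph
      let fib : {v : V // v ≠ u} → Type := fun v' => {i : Fin (F.degree u) // w i = v'.val}
      let argsH : ∀ v' : {v : V // v ≠ u}, (fib v' → C) →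
          ({e : {e : F.edgeSet // ¬ u ∈ (e : Sym2 V)} // mem' e v'} → C) →
          Fin (F.degree v'.val) → C :=
        fun v' x z j =>
          if hm : u ∈ ((δ v'.val j : F.edgeSet) : Sym2 V) then
            x ⟨(eqE u).symm ⟨δ v'.val j, hm⟩, hidx v'.val v'.2 j hm⟩
          else z ⟨⟨δ v'.val j, hm⟩, hvmem v'.val j⟩
      let Gh : ∀ v' : {v : V // v ≠ u},
          ({e : {e : F.edgeSet // ¬ u ∈ (e : Sym2 V)} // mem' e v'} → C) → ℝ≥0∞ :=
        fun v' z => (∑' x : fib v' → C,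
          ENNReal.ofReal (((h v'.val) (argsH v' x z)) ^ (2:ℕ))) ^ (2⁻¹ : ℝ)
      have hfin := finner (Fintype.card {v : V // v ≠ u}) {v : V // v ≠ u} le_rfl
        {e : F.edgeSet // ¬ u ∈ (e : Sym2 V)} p' q' mem' hp' hq' hpq' hex' Gh
      -- rewriting the square norm of the weights
      let Ω : ∀ v' : {v : V // v ≠ u},
          (({e : {e : F.edgeSet // ¬ u ∈ (e : Sym2 V)} // mem' e v'} → C) × (fib v' → C)) ≃
            (Fin (F.degree v'.val) → C) := fun v' =>
        { toFun := fun p => argsH v' p.2 p.1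
          invFun := fun d =>
            (fun e => d ((eqE v'.val).symm ⟨e.val.val, e.2⟩),
             fun i => d ((eqE v'.val).symm ⟨δ u i.val, by
                have h7 := hwmem i.val; rw [i.2] at h7; exact h7⟩))
          left_inv := fun p => by
            obtain ⟨z, x⟩ := p
            refine Prod.ext (funext fun e => ?_) (funext fun i => ?_)
            · have hj : (δ v'.val ((eqE v'.val).symm ⟨e.val.val, e.2⟩) : F.edgeSet) = e.val.val :=
                heqEs v'.val ⟨e.val.val, e.2⟩
              have hm : ¬ u ∈ ((δ v'.val ((eqE v'.val).symm ⟨e.val.val, e.2⟩) : F.edgeSet) :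
                  Sym2 V) := by rw [hj]; exact e.val.2
              show argsH v' x z ((eqE v'.val).symm ⟨e.val.val, e.2⟩) = z e
              simp only [argsH]
              rw [dif_neg hm]
              exact congrArg z (Subtype.ext (Subtype.ext hj))
            · have h7 : v'.val ∈ ((δ u i.val : F.edgeSet) : Sym2 V) := by
                have h8 := hwmem i.val; rw [i.2] at h8; exact h8
              have hj : (δ v'.val ((eqE v'.val).symm ⟨δ u i.val, h7⟩) : F.edgeSet) = δ u i.val :=
                heqEs v'.val ⟨δ u i.val, h7⟩
              have hm : u ∈ ((δ v'.val ((eqE v'.val).symm ⟨δ u i.val, h7⟩) : F.edgeSet) :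
                  Sym2 V) := by rw [hj]; exact humem i.val
              show argsH v' x z ((eqE v'.val).symm ⟨δ u i.val, h7⟩) = x i
              simp only [argsH]
              rw [dif_pos hm]
              refine congrArg x (Subtype.ext ?_)
              show (eqE u).symm ⟨δ v'.val ((eqE v'.val).symm ⟨δ u i.val, h7⟩), hm⟩ = i.val
              rw [show (⟨δ v'.val ((eqE v'.val).symm ⟨δ u i.val, h7⟩), hm⟩ :
                  {e : F.edgeSet // u ∈ (e : Sym2 V)}) = (eqE u) i.val from Subtype.ext hj,
                Equiv.symm_apply_apply]
          right_inv := fun d => by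
            funext j
            show argsH v' _ _ j = d j
            simp only [argsH]
            by_cases hm : u ∈ ((δ v'.val j : F.edgeSet) : Sym2 V)
            · rw [dif_pos hm]
              refine congrArg d ?_
              have h5 : (δ u ((eqE u).symm ⟨δ v'.val j, hm⟩) : F.edgeSet) = δ v'.val j :=
                heqEs u ⟨δ v'.val j, hm⟩
              rw [show (⟨δ u ((eqE u).symm ⟨δ v'.val j, hm⟩), _⟩ :
                  {e : F.edgeSet // v'.val ∈ (e : Sym2 V)}) = (eqE v'.val) j from
                Subtype.ext h5, Equiv.symm_apply_apply]
            · rw [dif_neg hm]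
              refine congrArg d ?_
              rw [show (⟨δ v'.val j, hvmem v'.val j⟩ :
                  {e : F.edgeSet // v'.val ∈ (e : Sym2 V)}) = (eqE v'.val) j from
                Subtype.ext rfl, Equiv.symm_apply_apply] }
      have hGhnorm : ∀ v' : {v : V // v ≠ u},
          (∑' z, (Gh v' z) ^ (2:ℕ)) ^ (2⁻¹:ℝ) = ENNReal.ofReal ‖h v'.val‖ := by
        intro v'
        have h3 : ∀ z, (Gh v' z) ^ (2:ℕ) = ∑' x : fib v' → C,
            ENNReal.ofReal (((h v'.val) (argsH v' x z)) ^ (2:ℕ)) := fun z => rpow_half_sq _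
        have h4 : ∑' z, (Gh v' z) ^ (2:ℕ) =
            ∑' d : Fin (F.degree v'.val) → C, ENNReal.ofReal (((h v'.val) d) ^ (2:ℕ)) := by
          rw [tsum_congr h3, ← ENNReal.tsum_prod]
          calc ∑' (p : ({e : {e : F.edgeSet // ¬ u ∈ (e : Sym2 V)} // mem' e v'} → C) ×
                  (fib v' → C)), ENNReal.ofReal (((h v'.val) (argsH v' p.2 p.1)) ^ (2:ℕ))
              = ∑' p, ENNReal.ofReal (((h v'.val) ((Ω v') p)) ^ (2:ℕ)) := tsum_congr fun p => rfl
            _ = _ := (Ω v').tsum_eq (fun d => ENNReal.ofReal (((h v'.val) d) ^ (2:ℕ)))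
        rw [h4, lp2_enn_sqrt]
      -- the product identity for fixed y
      have halpha : ∀ y : ({e : F.edgeSet // ¬ u ∈ (e : Sym2 V)} → C),
          ∏ v' : {v : V // v ≠ u}, Gh v' (fun e => y e.val) =
            ENNReal.ofReal |A y| * ∏ i, ENNReal.ofReal ‖s y i‖ := by
        intro y
        let w' : Fin (F.degree u) → {v : V // v ≠ u} := fun i => ⟨w i, hwne i⟩
        have hw'inj : Function.Injective w' := fun i j hij => hwinj (Subtype.ext_iff.mp hij)
        rw [← Finset.prod_sdiff (Finset.subset_univ (Finset.image w' Finset.univ))]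
        congr 1
        · -- complement part equals `ofReal |A y|`
          have hA2 : ENNReal.ofReal |A y| =
              ∏ v ∈ NB, ENNReal.ofReal |(h v) (args v (fun _ => c₀) y)| := by
            rw [show |A y| = ∏ v ∈ NB, |(h v) (args v (fun _ => c₀) y)| from Finset.abs_prod _ _,
              ENNReal.ofReal_prod_of_nonneg (fun _ _ => abs_nonneg _)]
          rw [hA2]
          have himg : Finset.image Subtype.val
              (Finset.univ \ Finset.image w' Finset.univ : Finset {v : V // v ≠ u}) = NB := by
            ext v
            constructor
            · intro hv
              rw [Finset.mem_image] at hv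
              obtain ⟨v', hv', rfl⟩ := hv
              rw [Finset.mem_sdiff] at hv'
              refine Finset.mem_sdiff.mpr ⟨Finset.mem_erase.mpr ⟨v'.2, Finset.mem_univ _⟩, ?_⟩
              intro hvim
              rw [Finset.mem_image] at hvim
              obtain ⟨i, _, hi⟩ := hvim
              exact hv'.2 (Finset.mem_image.mpr ⟨i, Finset.mem_univ _, Subtype.ext hi⟩)
            · intro hv
              rw [Finset.mem_sdiff, Finset.mem_erase] at hv
              refine Finset.mem_image.mpr ⟨⟨v, hv.1.1⟩, ?_, rfl⟩
              rw [Finset.mem_sdiff]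
              refine ⟨Finset.mem_univ _, ?_⟩
              intro hmem
              rw [Finset.mem_image] at hmem
              obtain ⟨i, _, hi⟩ := hmem
              exact hv.2 (Finset.mem_image.mpr ⟨i, Finset.mem_univ _, Subtype.ext_iff.mp hi⟩)
          rw [← himg, Finset.prod_image (fun a _ b _ hab => Subtype.coe_injective hab)]
          refine Finset.prod_congr rfl fun v' hv' => ?_
          haveI hfibE : IsEmpty (fib v') := ⟨fun i => by
            rw [Finset.mem_sdiff] at hv'
            exact hv'.2 (Finset.mem_image.mpr ⟨i.val, Finset.mem_univ _, Subtype.ext i.2⟩)⟩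
          have hu1 : ∀ x : fib v' → C,
              argsH v' x (fun e => y e.val) = args v'.val (fun _ => c₀) y := by
            intro x
            funext j
            by_cases hm : u ∈ ((δ v'.val j : F.edgeSet) : Sym2 V)
            · exact (hfibE.false ⟨(eqE u).symm ⟨δ v'.val j, hm⟩, hidx v'.val v'.2 j hm⟩).elim
            · simp only [argsH, args, dif_neg hm]
          show (∑' x : fib v' → C,
              ENNReal.ofReal (((h v'.val) (argsH v' x (fun e => y e.val))) ^ (2:ℕ))) ^ (2⁻¹:ℝ)
              = ENNReal.ofReal |(h v'.val) (args v'.val (fun _ => c₀) y)|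
          haveI : Unique (fib v' → C) := Pi.uniqueOfIsEmpty _
          rw [tsum_eq_single default (fun b hb => absurd (Subsingleton.elim b default) hb),
            hu1 default,
            show ((h v'.val) (args v'.val (fun _ => c₀) y)) ^ (2:ℕ)
              = |(h v'.val) (args v'.val (fun _ => c₀) y)| ^ (2:ℕ) from (sq_abs _).symm,
            ENNReal.ofReal_pow (abs_nonneg _), sq_rpow_half]
        · -- image part equals the product of slice norms
          rw [Finset.prod_image (fun a _ b _ hab => hw'inj hab)]
          refine Finset.prod_congr rfl fun i _ => ?_
          haveI : Unique (fib (w' i)) :=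
            ⟨⟨⟨i, rfl⟩⟩, fun j => Subtype.ext (hwinj j.2)⟩
          have hre : ∀ x : fib (w' i) → C,
              argsH (w' i) x (fun e => y e.val) = args (w i) (fun _ => x default) y := by
            intro x
            funext j
            by_cases hm : u ∈ ((δ (w i) j : F.edgeSet) : Sym2 V)
            · simp only [argsH, args, w', dif_pos hm]
              exact congrArg x (Subsingleton.elim _ _)
            · simp only [argsH, args, w', dif_neg hm]
          show (∑' x : fib (w' i) → C,
              ENNReal.ofReal (((h (w i)) (argsH (w' i) x (fun e => y e.val))) ^ (2:ℕ))) ^ (2⁻¹:ℝ)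
              = ENNReal.ofReal ‖s y i‖
          rw [← (Equiv.funUnique (fib (w' i)) C).symm.tsum_eq]
          rw [tsum_congr (fun c : C => by
            rw [hre ((Equiv.funUnique (fib (w' i)) C).symm c)]; rfl :
            ∀ c : C, ENNReal.ofReal (((h (w i))
              (argsH (w' i) ((Equiv.funUnique (fib (w' i)) C).symm c) (fun e => y e.val))) ^ (2:ℕ))
              = ENNReal.ofReal (((s y i) c) ^ (2:ℕ)))]
          exact lp2_enn_sqrt (s y i)
      -- putting everything together in `ℝ≥0∞`
      have hchain : ∑' y, ENNReal.ofReal |A y * ⟪tensorLp (s y), h u⟫_ℝ| ≤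
          ENNReal.ofReal (normR (Rk C (F.degree u)) (h u) *
            ∏ v ∈ Finset.univ.erase u, ‖h v‖) := by
        have hstep : ∀ y, ENNReal.ofReal |A y * ⟪tensorLp (s y), h u⟫_ℝ| ≤
            ENNReal.ofReal (normR (Rk C (F.degree u)) (h u)) *
              ∏ v' : {v : V // v ≠ u}, Gh v' (fun e => y e.val) := by
          intro y
          calc ENNReal.ofReal |A y * ⟪tensorLp (s y), h u⟫_ℝ|
              = ENNReal.ofReal (|A y| * |⟪tensorLp (s y), h u⟫_ℝ|) := by rw [abs_mul]
            _ ≤ ENNReal.ofReal (|A y| * (normR (Rk C (F.degree u)) (h u) * ∏ i, ‖s y i‖)) :=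
                ENNReal.ofReal_le_ofReal (mul_le_mul_of_nonneg_left (hTbound y) (abs_nonneg _))
            _ = ENNReal.ofReal (normR (Rk C (F.degree u)) (h u)) *
                (ENNReal.ofReal |A y| * ∏ i, ENNReal.ofReal ‖s y i‖) := by
                rw [ENNReal.ofReal_mul (abs_nonneg _),
                  ENNReal.ofReal_mul (normR_nonneg _ _),
                  ENNReal.ofReal_prod_of_nonneg (fun i _ => norm_nonneg _)]
                ring
            _ = ENNReal.ofReal (normR (Rk C (F.degree u)) (h u)) *
                ∏ v' : {v : V // v ≠ u}, Gh v' (fun e => y e.val) := by rw [halpha y]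
        calc ∑' y, ENNReal.ofReal |A y * ⟪tensorLp (s y), h u⟫_ℝ|
            ≤ ∑' y : ({e : F.edgeSet // ¬ u ∈ (e : Sym2 V)} → C),
              ENNReal.ofReal (normR (Rk C (F.degree u)) (h u)) *
                ∏ v' : {v : V // v ≠ u}, Gh v' (fun e => y e.val) := ENNReal.tsum_le_tsum hstep
          _ = ENNReal.ofReal (normR (Rk C (F.degree u)) (h u)) *
              ∑' y : ({e : F.edgeSet // ¬ u ∈ (e : Sym2 V)} → C),
                ∏ v' : {v : V // v ≠ u}, Gh v' (fun e => y e.val) := ENNReal.tsum_mul_left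
          _ ≤ ENNReal.ofReal (normR (Rk C (F.degree u)) (h u)) *
              ∏ v' : {v : V // v ≠ u}, (∑' z, (Gh v' z) ^ 2) ^ (2⁻¹:ℝ) := mul_le_mul_right hfin _
          _ = ENNReal.ofReal (normR (Rk C (F.degree u)) (h u)) *
              ∏ v' : {v : V // v ≠ u}, ENNReal.ofReal ‖h v'.val‖ := by
              rw [Finset.prod_congr rfl (fun v' _ => hGhnorm v')]
          _ = ENNReal.ofReal (normR (Rk C (F.degree u)) (h u) *
              ∏ v ∈ Finset.univ.erase u, ‖h v‖) := by
              rw [ENNReal.ofReal_mul (normR_nonneg _ _)]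
              congr 1
              rw [ENNReal.ofReal_prod_of_nonneg (fun v _ => norm_nonneg _)]
              exact (Finset.prod_subtype (Finset.univ.erase u) (by simp)
                (fun v => ENNReal.ofReal ‖h v‖)).symm
      calc piF F δ h ≤ ∑' y, |A y * ⟪tensorLp (s y), h u⟫_ℝ| := habs
        _ ≤ _ := tsum_le_of_enn _ (fun y => abs_nonneg _) hRHS0 hchain
    · rw [hpiF, tsum_eq_zero_of_not_summable hsum]
      exact hRHS0
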